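/- Let q be a prime power, d ≥ 2, and let a_0,…,a_{d−1} and b_0,…,b_{d−1} be elements of F_q with a_0 ≠ 0, a_{d−1} ≠ 0, b_0 ≠ 0, b_{d−1} ≠ 0. Define the linear no-boundary cellular automata F, G : F_q^{2(d−1)} → F_q^{d−1} by F(z)_i = Σ_{j=0}^{d−1} a_j z_{i+j} and G(z)_i = Σ_{j=0}^{d−1} b_j z_{i+j} for 0 ≤ i ≤ d−2. Then the joint map H : F_q^{2(d−1)} → F_q^{d−1} × F_q^{d−1} defined by H(z) = (F(z), G(z)) is a bijection (equivalently, the Latin squares of order q^{d−1} generated by F and G are orthogonal) if and only if the polynomials p_f(X) = a_0 + a_1 X + ⋯ + a_{d−1} X^{d−1} and p_g(X) = b_0 + b_1 X + ⋯ + b_{d−1} X^{d−1} are coprime in F_q[X]. -/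
import Mathlib

open Polynomial

section Helpers

variable {K : Type*} [Field K]

lemma coeff_finsum (m : ℕ) (c : Fin m → K) (k : ℕ) :
    (∑ j : Fin m, C (c j) * X ^ (j : ℕ)).coeff k =
      if h : k < m then c ⟨k, h⟩ else 0 := by
  rw [finset_sum_coeff]
  simp only [coeff_C_mul, coeff_X_pow, mul_ite, mul_one, mul_zero]
  split
  · next h =>
    rw [Finset.sum_eq_single (⟨k, h⟩ : Fin m)]
    · simp
    · intro j _ hj
      simp only [ite_eq_right_iff]
      intro hjk
      exact absurd (Fin.ext hjk.symm) hj
    · simp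
  · next h =>
    apply Finset.sum_eq_zero
    intro j _
    simp only [ite_eq_right_iff]
    intro hjk
    exact absurd (hjk ▸ j.isLt) h

lemma natDegree_finsum_le (m : ℕ) (c : Fin m → K) :
    (∑ j : Fin m, C (c j) * X ^ (j : ℕ)).natDegree ≤ m - 1 := by
  apply Polynomial.natDegree_sum_le_of_forall_le
  intro j _
  refine le_trans (natDegree_mul_le) ?_
  simp only [natDegree_C, natDegree_X_pow, zero_add]
  omega

lemma eq_finsum (m : ℕ) (p : K[X]) (hp : p.natDegree < m) :
    ∑ i : Fin m, C (p.coeff i) * X ^ (i : ℕ) = p := by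
  conv_rhs => rw [p.as_sum_range' m hp]
  rw [Fin.sum_univ_eq_sum_range (fun i => C (p.coeff i) * X ^ i)]
  simp [C_mul_X_pow_eq_monomial]

theorem key (m : ℕ) (pa pb : K[X]) (hpa : pa.natDegree = m) (hpb : pb.natDegree = m)
    (hpa0 : pa ≠ 0) (hpb0 : pb ≠ 0) :
    (∀ U V : K[X], U.natDegree < m → V.natDegree < m → U * pa + V * pb = 0 →
      U = 0 ∧ V = 0) ↔ IsCoprime pa pb := by
  classical
  constructor
  · intro H
    by_contra hcop
    have hunit : ¬ IsUnit (EuclideanDomain.gcd pa pb) := fun hu =>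
      hcop (EuclideanDomain.gcd_isUnit_iff.mp hu)
    obtain ⟨pa', hpa'⟩ := EuclideanDomain.gcd_dvd_left pa pb
    obtain ⟨pb', hpb'⟩ := EuclideanDomain.gcd_dvd_right pa pb
    have hh0 : EuclideanDomain.gcd pa pb ≠ 0 := fun h0 => hpa0 (by rw [hpa', h0, zero_mul])
    have hpa'0 : pa' ≠ 0 := fun h0 => hpa0 (by rw [hpa', h0, mul_zero])
    have hpb'0 : pb' ≠ 0 := fun h0 => hpb0 (by rw [hpb', h0, mul_zero])
    have hdh : 1 ≤ (EuclideanDomain.gcd pa pb).natDegree := by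
      by_contra hdeg
      push_neg at hdeg
      have hdeg' : (EuclideanDomain.gcd pa pb).natDegree = 0 := by omega
      obtain ⟨c, hc⟩ := Polynomial.natDegree_eq_zero.mp hdeg'
      exact hunit (hc ▸ isUnit_C.mpr (isUnit_iff_ne_zero.mpr
        (fun hc0 => hh0 (by rw [← hc, hc0, map_zero]))))
    have hda : pa'.natDegree < m := by
      have := Polynomial.natDegree_mul hh0 hpa'0
      rw [← hpa', hpa] at this
      omega
    have hdb : pb'.natDegree < m := by
      have := Polynomial.natDegree_mul hh0 hpb'0
      rw [← hpb', hpb] at this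
      omega
    have hzero : pb' * pa + (-pa') * pb = 0 := by
      linear_combination pb' * hpa' - pa' * hpb'
    have hdn : (-pa').natDegree < m := by rwa [natDegree_neg]
    exact hpb'0 (H pb' (-pa') hdb hdn hzero).1
  · intro H U V hU hV heq
    have hdvd : pa ∣ V * pb := ⟨-U, by linear_combination heq⟩
    have hV0 : V = 0 := by
      refine Polynomial.eq_zero_of_dvd_of_natDegree_lt (H.dvd_of_dvd_mul_right hdvd) ?_
      rwa [hpa]
    have hU0 : U = 0 := by
      rw [hV0, zero_mul, add_zero, mul_eq_zero] at heq
      tauto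
    exact ⟨hU0, hV0⟩

end Helpers

open Polynomial in
/-- Two LBCA of diameter `d` generate orthogonal Latin squares iff their
associated polynomials are coprime. -/
theorem stmt_2 (K : Type*) [Field K] [Fintype K] (d : ℕ) (hd : 2 ≤ d)
    (a b : Fin d → K)
    (ha0 : a ⟨0, by omega⟩ ≠ 0) (had : a ⟨d - 1, by omega⟩ ≠ 0)
    (hb0 : b ⟨0, by omega⟩ ≠ 0) (hbd : b ⟨d - 1, by omega⟩ ≠ 0)
    (F G : (Fin (2 * (d - 1)) → K) → (Fin (d - 1) → K))
    (hF : ∀ z : Fin (2 * (d - 1)) → K, ∀ i : Fin (d - 1),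
      F z i = ∑ j : Fin d, a j *
        z ⟨(i : ℕ) + (j : ℕ), by have := i.isLt; have := j.isLt; omega⟩)
    (hG : ∀ z : Fin (2 * (d - 1)) → K, ∀ i : Fin (d - 1),
      G z i = ∑ j : Fin d, b j *
        z ⟨(i : ℕ) + (j : ℕ), by have := i.isLt; have := j.isLt; omega⟩) :
    Function.Bijective (fun z : Fin (2 * (d - 1)) → K => (F z, G z)) ↔
      IsCoprime (∑ j : Fin d, C (a j) * X ^ (j : ℕ))
        (∑ j : Fin d, C (b j) * X ^ (j : ℕ)) := by
  classical
  set pA : K[X] := ∑ j : Fin d, C (a j) * X ^ (j : ℕ) with hpA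
  set pB : K[X] := ∑ j : Fin d, C (b j) * X ^ (j : ℕ) with hpB
  -- basic facts on pA, pB
  have hcA : ∀ k : ℕ, pA.coeff k = if h : k < d then a ⟨k, h⟩ else 0 := fun k =>
    coeff_finsum d a k
  have hcB : ∀ k : ℕ, pB.coeff k = if h : k < d then b ⟨k, h⟩ else 0 := fun k =>
    coeff_finsum d b k
  have hcAd : pA.coeff (d - 1) ≠ 0 := by
    rw [hcA]
    rw [dif_pos (by omega : d - 1 < d)]
    exact had
  have hcBd : pB.coeff (d - 1) ≠ 0 := by
    rw [hcB]
    rw [dif_pos (by omega : d - 1 < d)]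
    exact hbd
  have hdA : pA.natDegree = d - 1 :=
    le_antisymm (natDegree_finsum_le d a) (le_natDegree_of_ne_zero hcAd)
  have hdB : pB.natDegree = d - 1 :=
    le_antisymm (natDegree_finsum_le d b) (le_natDegree_of_ne_zero hcBd)
  have hA0 : pA ≠ 0 := fun h => hcAd (by rw [h, coeff_zero])
  have hB0 : pB ≠ 0 := fun h => hcBd (by rw [h, coeff_zero])
  -- the Sylvester-type matrix
  set N : Matrix (Fin (d - 1) ⊕ Fin (d - 1)) (Fin (2 * (d - 1))) K :=
    fun r k => (Sum.elim (fun i : Fin (d - 1) => pA * X ^ (i : ℕ))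
      (fun i : Fin (d - 1) => pB * X ^ (i : ℕ)) r).coeff (k : ℕ) with hN
  have e : (Fin (d - 1) ⊕ Fin (d - 1)) ≃ Fin (2 * (d - 1)) :=
    finSumFinEquiv.trans (finCongr (by omega))
  set M : Matrix (Fin (2 * (d - 1))) (Fin (2 * (d - 1))) K := N.submatrix e.symm id with hM
  -- row computation
  have sumcalc : ∀ (p : K[X]) (c : Fin d → K),
      (∀ k : ℕ, p.coeff k = if h : k < d then c ⟨k, h⟩ else 0) →
      ∀ (z : Fin (2 * (d - 1)) → K) (i : Fin (d - 1)),
      (∑ k : Fin (2 * (d - 1)), (p * X ^ (i : ℕ)).coeff (k : ℕ) * z k) =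
        ∑ j : Fin d, c j *
          z ⟨(i : ℕ) + (j : ℕ), by have := i.isLt; have := j.isLt; omega⟩ := by
    intro p c hc z i
    set em : Fin d → Fin (2 * (d - 1)) := fun j =>
      ⟨(i : ℕ) + (j : ℕ), by have := i.isLt; have := j.isLt; omega⟩ with hem
    have hinj : ∀ j1 ∈ Finset.univ, ∀ j2 ∈ Finset.univ, em j1 = em j2 → j1 = j2 := by
      intro j1 _ j2 _ hj
      have : (i : ℕ) + (j1 : ℕ) = (i : ℕ) + (j2 : ℕ) := congrArg Fin.val hj
      exact Fin.ext (by omega)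
    rw [← Finset.sum_subset (Finset.subset_univ (Finset.univ.image em))]
    · rw [Finset.sum_image hinj]
      apply Finset.sum_congr rfl
      intro j _
      rw [coeff_mul_X_pow', if_pos (by simp [hem])]
      have : ((em j : Fin (2 * (d - 1))) : ℕ) - (i : ℕ) = (j : ℕ) := by
        simp [hem]
      rw [this, hc, dif_pos j.isLt]
    · intro k _ hk
      rw [coeff_mul_X_pow']
      split
      · next hik =>
        rw [hc]
        split
        · next hkd =>
          exfalso
          apply hk
          refine Finset.mem_image.mpr ⟨⟨(k : ℕ) - (i : ℕ), hkd⟩, Finset.mem_univ _, ?_⟩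
          apply Fin.ext
          simp [hem]
          omega
        · rw [zero_mul]
      · rw [zero_mul]
  -- F and G as rows of N
  have hFG : (fun z : Fin (2 * (d - 1)) → K => (F z, G z)) =
      (Equiv.sumArrowEquivProdArrow _ _ K) ∘ N.mulVec := by
    funext z
    refine Prod.ext ?_ ?_ <;> funext i
    · show F z i = N.mulVec z (Sum.inl i)
      rw [hF z i, ← sumcalc pA a hcA z i]
      simp [Matrix.mulVec, dotProduct, hN]
    · show G z i = N.mulVec z (Sum.inr i)
      rw [hG z i, ← sumcalc pB b hcB z i]
      simp [Matrix.mulVec, dotProduct, hN]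
  rw [hFG, Equiv.comp_bijective]
  -- from N to the square matrix M
  have hMN : N.mulVec = (Equiv.arrowCongr e (Equiv.refl K)).symm ∘ M.mulVec := by
    funext z r
    simp [hM, Matrix.mulVec, dotProduct, Equiv.arrowCongr]
  rw [hMN, Function.Bijective.of_comp_iff' (Equiv.bijective _)]
  -- bijectivity ↔ unit ↔ injectivity of transpose
  have hbu : Function.Bijective M.mulVec ↔ IsUnit M := by
    constructor
    · intro hb
      exact Matrix.mulVec_injective_iff_isUnit.mp hb.injective
    · intro hu
      exact ⟨Matrix.mulVec_injective_iff_isUnit.mpr hu,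
        Matrix.mulVec_surjective_iff_isUnit.mpr hu⟩
  rw [hbu, ← Matrix.vecMul_injective_iff_isUnit]
  have hMv : M.vecMul = N.vecMul ∘ (fun w : Fin (2 * (d - 1)) → K => w ∘ e) := by
    funext w k
    show ∑ r, w r * M r k = ∑ s, w (e s) * N s k
    exact Fintype.sum_equiv e.symm _ _ (fun r => by simp [hM])
  have hbij : Function.Bijective (fun w : Fin (2 * (d - 1)) → K => w ∘ ⇑e) :=
    (Equiv.arrowCongr e.symm (Equiv.refl K)).bijective
  rw [hMv, Function.Injective.of_comp_iff' _ hbij]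
  -- vecMul as polynomial coefficients
  have hvec : ∀ w : Fin (d - 1) ⊕ Fin (d - 1) → K, ∀ k : Fin (2 * (d - 1)),
      N.vecMul w k =
        ((∑ i : Fin (d - 1), C (w (Sum.inl i)) * X ^ (i : ℕ)) * pA +
         (∑ i : Fin (d - 1), C (w (Sum.inr i)) * X ^ (i : ℕ)) * pB).coeff (k : ℕ) := by
    intro w k
    show ∑ r, w r * N r k = _
    rw [Fintype.sum_sum_type, coeff_add, Finset.sum_mul, Finset.sum_mul,
      finset_sum_coeff, finset_sum_coeff]
    congr 1
    · refine Finset.sum_congr rfl fun i _ => ?_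
      show w (Sum.inl i) * (pA * X ^ (i : ℕ)).coeff (k : ℕ) = _
      rw [show C (w (Sum.inl i)) * X ^ (i : ℕ) * pA =
        C (w (Sum.inl i)) * (pA * X ^ (i : ℕ)) by ring, coeff_C_mul]
    · refine Finset.sum_congr rfl fun i _ => ?_
      show w (Sum.inr i) * (pB * X ^ (i : ℕ)).coeff (k : ℕ) = _
      rw [show C (w (Sum.inr i)) * X ^ (i : ℕ) * pB =
        C (w (Sum.inr i)) * (pB * X ^ (i : ℕ)) by ring, coeff_C_mul]
  -- final equivalence with coprimality
  rw [← key (d - 1) pA pB hdA hdB hA0 hB0]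
  constructor
  · intro hinj U V hU hV heq
    set w : Fin (d - 1) ⊕ Fin (d - 1) → K :=
      Sum.elim (fun i => U.coeff i) (fun i => V.coeff i) with hw
    have hU' : (∑ i : Fin (d - 1), C (w (Sum.inl i)) * X ^ (i : ℕ)) = U := by
      simpa [hw] using eq_finsum (d - 1) U hU
    have hV' : (∑ i : Fin (d - 1), C (w (Sum.inr i)) * X ^ (i : ℕ)) = V := by
      simpa [hw] using eq_finsum (d - 1) V hV
    have hw0 : w = 0 := by
      apply hinj
      funext k
      show Matrix.vecMul w N k = Matrix.vecMul 0 N k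
      rw [hvec w k, hvec 0 k, hU', hV', heq]
      simp
    constructor
    · rw [← eq_finsum (d - 1) U hU]
      apply Finset.sum_eq_zero
      intro i _
      have : U.coeff i = w (Sum.inl i) := rfl
      rw [this, hw0]
      simp
    · rw [← eq_finsum (d - 1) V hV]
      apply Finset.sum_eq_zero
      intro i _
      have : V.coeff i = w (Sum.inr i) := rfl
      rw [this, hw0]
      simp
  · intro hk
    intro w1 w2 hweq
    have hlin : ∀ w : Fin (d - 1) ⊕ Fin (d - 1) → K, N.vecMul w = 0 → w = 0 := by
      intro w hw
      set U : K[X] := ∑ i : Fin (d - 1), C (w (Sum.inl i)) * X ^ (i : ℕ) with hU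
      set V : K[X] := ∑ i : Fin (d - 1), C (w (Sum.inr i)) * X ^ (i : ℕ) with hV
      have hUd : U.natDegree < d - 1 :=
        lt_of_le_of_lt (natDegree_finsum_le (d - 1) _) (by omega)
      have hVd : V.natDegree < d - 1 :=
        lt_of_le_of_lt (natDegree_finsum_le (d - 1) _) (by omega)
      have hsum : U * pA + V * pB = 0 := by
        have hdeg : (U * pA + V * pB).natDegree < 2 * (d - 1) := by
          refine lt_of_le_of_lt (natDegree_add_le _ _) ?_
          have h1 := natDegree_mul_le (p := U) (q := pA)
          have h2 := natDegree_mul_le (p := V) (q := pB)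
          rw [hdA] at h1
          rw [hdB] at h2
          simp only [sup_lt_iff]
          omega
        ext k
        rw [coeff_zero]
        by_cases hk2 : k < 2 * (d - 1)
        · have h2 := congrFun hw ⟨k, hk2⟩
          rw [hvec w ⟨k, hk2⟩, ← hU, ← hV] at h2
          simpa using h2
        · exact coeff_eq_zero_of_natDegree_lt (by omega)
      obtain ⟨hU0, hV0⟩ := hk U V hUd hVd hsum
      funext r
      cases r with
      | inl i =>
        have : w (Sum.inl i) = U.coeff i := by
          rw [hU, coeff_finsum, dif_pos i.isLt]
        rw [this, hU0]
        simp
      | inr i =>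
        have : w (Sum.inr i) = V.coeff i := by
          rw [hV, coeff_finsum, dif_pos i.isLt]
        rw [this, hV0]
        simp
    have hweq' : Matrix.vecMul w1 N = Matrix.vecMul w2 N := hweq
    have h12 : N.vecMul (w1 - w2) = 0 := by
      rw [Matrix.sub_vecMul, hweq', sub_self]
    have := hlin _ h12
    exact sub_eq_zero.mp this
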